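/- For all real α, β > −1 and all integers k, n ≥ 0, one has ∫_0^{π/2} (1 + cos(2θ))^k · P_n^{(α,β)}(cos(2θ)) dν^{(α,β)}(θ) = binom(k,n) · 2^k (α+1)_n (β+1)_k / (α+β+2)_{n+k}, where binom(k,n) = 0 if n > k. -/

import Mathlib

open MeasureTheory Finset Real
open scoped ENNReal NNReal

/-- The Pochhammer symbol `(x)_n = x (x+1) ⋯ (x+n-1)`. -/
noncomputable def poch (x : ℝ) (n : ℕ) : ℝ := (ascPochhammer ℝ n).eval x

/-- The Jacobi polynomial `P_n^{(α,β)}`, via its standard explicit expansion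
(equivalent to Rodrigues' formula). -/
noncomputable def jacobiP (α β : ℝ) (n : ℕ) (t : ℝ) : ℝ :=
  ∑ k ∈ Finset.range (n + 1),
    poch (α + k + 1) (n - k) / ((n - k).factorial : ℝ) *
      (poch (β + (n - k) + 1) k / (k.factorial : ℝ)) *
      ((t - 1) / 2) ^ k * ((t + 1) / 2) ^ (n - k)

/-- The probability measure `ν^{(α,β)}` on `[0, π/2]` with density
`γ_{α,β}⁻¹ sin(θ)^{2α+1} cos(θ)^{2β+1}`, where
`γ_{α,β} = Γ(α+1)Γ(β+1)/(2Γ(α+β+2))`. -/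
noncomputable def nuMeasure (α β : ℝ) : Measure ℝ :=
  (volume.restrict (Set.Ioo 0 (π / 2))).withDensity fun θ =>
    ENNReal.ofReal (2 * Real.Gamma (α + β + 2) / (Real.Gamma (α + 1) * Real.Gamma (β + 1)) *
      Real.sin θ ^ (2 * α + 1) * Real.cos θ ^ (2 * β + 1))

lemma poch_zero (x : ℝ) : poch x 0 = 1 := by simp [poch]
lemma poch_succ (x : ℝ) (m : ℕ) : poch x (m+1) = poch x m * (x + m) :=
  ascPochhammer_succ_eval ..
lemma poch_succ' (x : ℝ) (m : ℕ) : poch x (m+1) = x * poch (x+1) m := by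
  simp [poch, ascPochhammer_succ_left, Polynomial.eval_comp]

lemma poch_pos {x : ℝ} (hx : 0 < x) (m : ℕ) : 0 < poch x m := by
  induction m with
  | zero => simp [poch_zero]
  | succ m ih => rw [poch_succ]; positivity

lemma poch_add (x : ℝ) (m l : ℕ) : poch x (m + l) = poch x m * poch (x + m) l := by
  induction l with
  | zero => simp [poch_zero]
  | succ l ih =>
    rw [← add_assoc, poch_succ, ih, poch_succ, mul_assoc]
    push_cast; ring

lemma poch_sub_poch (x : ℝ) (m : ℕ) :
    poch (x+1) m - poch x m = m * poch (x+1) (m-1) := by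
  cases m with
  | zero => simp [poch_zero]
  | succ r =>
    rw [poch_succ, poch_succ' x r, Nat.add_sub_cancel]
    push_cast
    ring

lemma iter_fwdDiff_poch (k : ℕ) : ∀ n : ℕ,
    (fwdDiff (1:ℝ))^[n] (fun x => poch (x+1) k)
      = fun x => (k.descFactorial n : ℝ) * poch (x+n+1) (k-n) := by
  intro n
  induction n with
  | zero => simp
  | succ n ih =>
    rw [Function.iterate_succ_apply', ih]
    funext x
    rw [Nat.descFactorial_succ]
    simp only [fwdDiff]
    have h1 : x + 1 + (n:ℝ) + 1 = (x + (n:ℝ) + 1) + 1 := by ring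
    rw [h1, ← mul_sub, poch_sub_poch]
    have h2 : (k - n - 1 : ℕ) = k - (n+1) := by omega
    rw [h2, Nat.cast_mul]
    push_cast
    ring_nf

lemma sum_key (k n : ℕ) (b : ℝ) :
    ∑ j ∈ Finset.range (n+1), (-1:ℝ)^j * (n.choose j) * poch (b + (↑n - ↑j) + 1) k
      = (k.descFactorial n : ℝ) * poch (b + n + 1) (k - n) := by
  have h := fwdDiff_iter_eq_sum_shift (1:ℝ) (fun x => poch (x+1) k) n b
  rw [iter_fwdDiff_poch] at h
  simp only [zsmul_eq_mul, Int.cast_mul, Int.cast_pow, Int.cast_neg, Int.cast_one,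
    Int.cast_natCast, smul_eq_mul, nsmul_eq_mul, mul_one] at h
  rw [h, ← Finset.sum_range_reflect]
  apply Finset.sum_congr rfl
  intro i hi
  rw [Finset.mem_range] at hi
  have hi' : i ≤ n := by omega
  have h3 : n + 1 - 1 - i = n - i := by omega
  rw [h3, Nat.choose_symm hi']
  have h4 : (n:ℝ) - ↑(n - i) = i := by
    rw [Nat.cast_sub hi']; ring
  rw [h4]

lemma Gamma_poch {x : ℝ} (hx : 0 < x) (m : ℕ) :
    Real.Gamma (x + m) = poch x m * Real.Gamma x := by
  induction m with
  | zero => simp [poch_zero]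
  | succ m ih =>
    have h1 : x + ((m:ℝ)+1) = (x + m) + 1 := by ring
    push_cast
    rw [h1, Real.Gamma_add_one (by positivity), poch_succ, ih]
    ring

section Analytic
open Set intervalIntegral

lemma realIntEq {u v : ℝ} (hu : 0 < u) (hv : 0 < v) :
    (Complex.betaIntegral u v) = ((∫ x in (0:ℝ)..1, x ^ (u-1) * (1-x) ^ (v-1) : ℝ) : ℂ) := by
  rw [Complex.betaIntegral, ← intervalIntegral.integral_ofReal]
  rw [intervalIntegral.integral_of_le zero_le_one, intervalIntegral.integral_of_le zero_le_one]
  apply setIntegral_congr_fun measurableSet_Ioc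
  intro x hx
  have hx0 : (0:ℝ) ≤ x := le_of_lt hx.1
  have hx1 : (0:ℝ) ≤ 1 - x := by linarith [hx.2]
  show (x:ℂ) ^ ((u:ℂ)-1) * (1-(x:ℂ)) ^ ((v:ℂ)-1) = ((x ^ (u-1) * (1-x)^(v-1) : ℝ) : ℂ)
  rw [show ((u:ℂ) - 1) = ((u - 1 : ℝ) : ℂ) by push_cast; ring,
      show ((v:ℂ) - 1) = ((v - 1 : ℝ) : ℂ) by push_cast; ring,
      show (1 - (x:ℂ)) = ((1 - x : ℝ) : ℂ) by push_cast; ring,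
      ← Complex.ofReal_cpow hx0, ← Complex.ofReal_cpow hx1]
  push_cast
  ring

lemma betaReal {u v : ℝ} (hu : 0 < u) (hv : 0 < v) :
    ∫ x in Ioo (0:ℝ) 1, x ^ (u-1) * (1-x) ^ (v-1)
      = Real.Gamma u * Real.Gamma v / Real.Gamma (u+v) := by
  have h := Complex.Gamma_mul_Gamma_eq_betaIntegral
    (by simpa using hu : 0 < Complex.re u) (by simpa using hv : 0 < Complex.re v)
  rw [realIntEq hu hv] at h
  rw [show ((u:ℂ) + v) = ((u + v : ℝ) : ℂ) by push_cast; ring] at h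
  rw [Complex.Gamma_ofReal, Complex.Gamma_ofReal, Complex.Gamma_ofReal,
    ← Complex.ofReal_mul, ← Complex.ofReal_mul] at h
  have h2 := Complex.ofReal_injective h
  have hpos : Real.Gamma (u+v) ≠ 0 := (Real.Gamma_pos_of_pos (by linarith)).ne'
  rw [intervalIntegral.integral_of_le zero_le_one, integral_Ioc_eq_integral_Ioo] at h2
  rw [eq_div_iff hpos, h2]
  ring

lemma betaIntegrable {a b : ℝ} (ha : -1 < a) (hb : -1 < b) :
    IntegrableOn (fun x : ℝ => x ^ a * (1-x) ^ b) (Ioo (0:ℝ) 1) := by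
  have h1 : IntervalIntegrable (fun x : ℝ => x ^ a * (1-x) ^ b) volume 0 (1/2) := by
    apply IntervalIntegrable.mul_continuousOn (intervalIntegrable_rpow' ha)
    apply ContinuousOn.rpow_const (by fun_prop)
    intro x hx
    rw [uIcc_of_le (by norm_num : (0:ℝ) ≤ 1/2), Set.mem_Icc] at hx
    left; intro h; linarith [hx.2]
  have h2 : IntervalIntegrable (fun x : ℝ => x ^ a * (1-x) ^ b) volume (1/2) 1 := by
    apply IntervalIntegrable.continuousOn_mul
    · have := (intervalIntegrable_rpow' hb (a := 0) (b := 1/2)).comp_sub_left 1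
      norm_num at this ⊢
      exact this.symm
    · apply ContinuousOn.rpow_const (by fun_prop)
      intro x hx
      rw [uIcc_of_le (by norm_num : (1:ℝ)/2 ≤ 1), Set.mem_Icc] at hx
      left; intro h; linarith [hx.1]
  have := (h1.trans h2)
  rw [intervalIntegrable_iff_integrableOn_Ioo_of_le zero_le_one] at this
  exact this

lemma betaReal' {a b : ℝ} (ha : -1 < a) (hb : -1 < b) :
    ∫ x in Ioo (0:ℝ) 1, x ^ a * (1-x) ^ b
      = Real.Gamma (a+1) * Real.Gamma (b+1) / Real.Gamma (a+b+2) := by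
  have := betaReal (u := a+1) (v := b+1) (by linarith) (by linarith)
  norm_num at this
  rw [this]
  ring_nf

lemma sinsq_deriv : ∀ θ ∈ Ioo 0 (π/2), HasDerivWithinAt (fun θ : ℝ => Real.sin θ ^ 2)
    ((fun θ => 2 * Real.sin θ * Real.cos θ) θ) (Ioo 0 (π/2)) θ := by
  intro θ _
  have h := ((Real.hasDerivAt_sin θ).fun_pow 2).hasDerivWithinAt (s := Ioo 0 (π/2))
  simpa using h

lemma sinsq_inj : Set.InjOn (fun θ : ℝ => Real.sin θ ^ 2) (Ioo 0 (π/2)) := by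
  intro x hx y hy hxy
  simp only at hxy
  have h1 : Real.sin x = Real.sin y := by
    have hx0 : 0 ≤ Real.sin x := Real.sin_nonneg_of_nonneg_of_le_pi hx.1.le
      (by linarith [hx.2, Real.pi_pos])
    have hy0 : 0 ≤ Real.sin y := Real.sin_nonneg_of_nonneg_of_le_pi hy.1.le
      (by linarith [hy.2, Real.pi_pos])
    nlinarith [hxy]
  exact Real.injOn_sin ⟨by linarith [hx.1, Real.pi_pos], hx.2.le⟩
    ⟨by linarith [hy.1, Real.pi_pos], hy.2.le⟩ h1

lemma sinsq_image : (fun θ : ℝ => Real.sin θ ^ 2) '' Ioo 0 (π/2) = Ioo (0:ℝ) 1 := by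
  ext x
  constructor
  · rintro ⟨θ, hθ, rfl⟩
    have hs : 0 < Real.sin θ := Real.sin_pos_of_pos_of_lt_pi hθ.1
      (by linarith [hθ.2, Real.pi_pos])
    have hs1 : Real.sin θ < 1 := by
      have := Real.strictMonoOn_sin (a := θ) (b := π/2)
        ⟨by linarith [hθ.1, Real.pi_pos], hθ.2.le⟩ ⟨by linarith [Real.pi_pos], le_refl _⟩ hθ.2
      simpa using this
    simp only
    constructor <;> nlinarith
  · rintro ⟨hx0, hx1⟩
    refine ⟨Real.arcsin (Real.sqrt x), ⟨?_, ?_⟩, ?_⟩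
    · exact Real.arcsin_pos.2 (Real.sqrt_pos.2 hx0)
    · apply Real.arcsin_lt_pi_div_two.2
      calc Real.sqrt x < Real.sqrt 1 := Real.sqrt_lt_sqrt hx0.le hx1
        _ = 1 := by simp
    · have h1 : Real.sqrt x ≤ 1 := by
        calc Real.sqrt x ≤ Real.sqrt 1 := Real.sqrt_le_sqrt hx1.le
          _ = 1 := by simp
      simp only
      rw [Real.sin_arcsin (by linarith [Real.sqrt_nonneg x]) h1]
      exact Real.sq_sqrt hx0.le

lemma sinCos_smul_eq : ∀ a b : ℝ, ∀ θ ∈ Ioo (0:ℝ) (π/2),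
    |2 * Real.sin θ * Real.cos θ| • ((Real.sin θ ^ 2) ^ a * (1 - Real.sin θ ^ 2) ^ b)
      = 2 * (Real.sin θ ^ (2*a+1) * Real.cos θ ^ (2*b+1)) := by
  intro a b θ hθ
  have hs : 0 < Real.sin θ := Real.sin_pos_of_pos_of_lt_pi hθ.1
    (by linarith [hθ.2, Real.pi_pos])
  have hc : 0 < Real.cos θ := Real.cos_pos_of_mem_Ioo
    ⟨by linarith [hθ.1, Real.pi_pos], hθ.2⟩
  have h1 : (1:ℝ) - Real.sin θ ^ 2 = Real.cos θ ^ 2 := by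
    have := Real.sin_sq_add_cos_sq θ; linarith
  rw [h1, abs_of_pos (by positivity), smul_eq_mul]
  rw [show (Real.sin θ ^ 2) = Real.sin θ ^ ((2:ℕ):ℝ) by rw [Real.rpow_natCast],
      show (Real.cos θ ^ 2) = Real.cos θ ^ ((2:ℕ):ℝ) by rw [Real.rpow_natCast],
      ← Real.rpow_mul hs.le, ← Real.rpow_mul hc.le]
  rw [show 2*a+1 = ((2:ℕ):ℝ)*a + 1 by norm_num, show 2*b+1 = ((2:ℕ):ℝ)*b + 1 by norm_num,
      Real.rpow_add hs, Real.rpow_add hc, Real.rpow_one, Real.rpow_one]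
  ring

lemma sinCosBeta {a b : ℝ} (ha : -1 < a) (hb : -1 < b) :
    (∫ θ in Ioo (0:ℝ) (π/2), Real.sin θ ^ (2*a+1) * Real.cos θ ^ (2*b+1))
      = Real.Gamma (a+1) * Real.Gamma (b+1) / (2 * Real.Gamma (a+b+2)) := by
  have h := integral_image_eq_integral_abs_deriv_smul measurableSet_Ioo sinsq_deriv
    sinsq_inj (fun x => x ^ a * (1-x) ^ b)
  rw [sinsq_image, betaReal' ha hb] at h
  rw [setIntegral_congr_fun measurableSet_Ioo (fun θ hθ => sinCos_smul_eq a b θ hθ)] at h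
  rw [MeasureTheory.integral_const_mul] at h
  rw [show Real.Gamma (a+1) * Real.Gamma (b+1) / (2 * Real.Gamma (a+b+2))
    = (Real.Gamma (a+1) * Real.Gamma (b+1) / Real.Gamma (a+b+2))/2 by ring, h]
  ring

lemma sinCosIntegrable {a b : ℝ} (ha : -1 < a) (hb : -1 < b) :
    IntegrableOn (fun θ => Real.sin θ ^ (2*a+1) * Real.cos θ ^ (2*b+1)) (Ioo (0:ℝ) (π/2)) := by
  have h := (integrableOn_image_iff_integrableOn_abs_deriv_smul measurableSet_Ioo sinsq_deriv
    sinsq_inj (fun x => x ^ a * (1-x) ^ b)).1 (by rw [sinsq_image]; exact betaIntegrable ha hb)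
  have h2 : IntegrableOn (fun θ => 2 * (Real.sin θ ^ (2*a+1) * Real.cos θ ^ (2*b+1)))
      (Ioo (0:ℝ) (π/2)) := h.congr_fun (fun θ hθ => sinCos_smul_eq a b θ hθ) measurableSet_Ioo
  have h3 : IntegrableOn (fun θ => (1/2 : ℝ) * (2 * (Real.sin θ ^ (2*a+1) * Real.cos θ ^ (2*b+1))))
      (Ioo (0:ℝ) (π/2)) := h2.const_mul (1/2 : ℝ)
  refine h3.congr_fun (fun θ _ => by ring) measurableSet_Ioo

end Analytic

lemma rpow_sq_pow {s : ℝ} (hs : 0 < s) (c : ℝ) (m : ℕ) :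
    s ^ c * (s^2)^m = s ^ (c + 2*(m:ℝ)) := by
  rw [← pow_mul, ← Real.rpow_natCast s (2*m), ← Real.rpow_add hs]
  push_cast; ring_nf

/-- Jacobi coefficients of the powers `(1 + cos 2θ)^k`. -/
theorem stmt8 (α β : ℝ) (hα : -1 < α) (hβ : -1 < β) (k n : ℕ) :
    ∫ θ, (1 + Real.cos (2 * θ)) ^ k * jacobiP α β n (Real.cos (2 * θ)) ∂(nuMeasure α β)
      = (k.choose n : ℝ) * 2 ^ k * poch (α + 1) n * poch (β + 1) k /
          poch (α + β + 2) (n + k) := by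
  have hGa : 0 < Real.Gamma (α+1) := Real.Gamma_pos_of_pos (by linarith)
  have hGb : 0 < Real.Gamma (β+1) := Real.Gamma_pos_of_pos (by linarith)
  have hGc : 0 < Real.Gamma (α+β+2) := Real.Gamma_pos_of_pos (by linarith)
  set C : ℝ := 2 * Real.Gamma (α + β + 2) / (Real.Gamma (α + 1) * Real.Gamma (β + 1)) with hC
  set g : ℝ → ℝ := fun θ =>
    C * Real.sin θ ^ (2 * α + 1) * Real.cos θ ^ (2 * β + 1) with hg
  have hCpos : 0 < C := by rw [hC]; positivity
  -- step 1 : withDensity to set integral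
  have hgc : ContinuousOn g (Set.Ioo 0 (π/2)) := by
    apply ContinuousOn.mul
    apply ContinuousOn.mul continuousOn_const
    · apply ContinuousOn.rpow_const (Real.continuous_sin.continuousOn)
      intro θ hθ
      exact Or.inl (Real.sin_pos_of_pos_of_lt_pi hθ.1 (by linarith [hθ.2, Real.pi_pos])).ne'
    · apply ContinuousOn.rpow_const (Real.continuous_cos.continuousOn)
      intro θ hθ
      exact Or.inl (Real.cos_pos_of_mem_Ioo
        ⟨by linarith [hθ.1, Real.pi_pos], hθ.2⟩).ne'
  have hgm : AEMeasurable (fun θ => (g θ).toNNReal)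
      (volume.restrict (Set.Ioo 0 (π/2))) :=
    measurable_real_toNNReal.comp_aemeasurable (hgc.aemeasurable measurableSet_Ioo)
  have h1 : (∫ θ, (1 + Real.cos (2 * θ)) ^ k * jacobiP α β n (Real.cos (2 * θ))
        ∂(nuMeasure α β))
      = ∫ θ in Set.Ioo 0 (π/2),
          (g θ) * ((1 + Real.cos (2 * θ)) ^ k * jacobiP α β n (Real.cos (2 * θ))) := by
    simp only [nuMeasure]
    rw [show (fun θ => ENNReal.ofReal (2 * Real.Gamma (α + β + 2) /
          (Real.Gamma (α + 1) * Real.Gamma (β + 1)) *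
          Real.sin θ ^ (2 * α + 1) * Real.cos θ ^ (2 * β + 1)))
        = (fun θ => (((g θ).toNNReal : ℝ≥0) : ℝ≥0∞)) from rfl]
    rw [integral_withDensity_eq_integral_smul₀ hgm]
    apply setIntegral_congr_fun measurableSet_Ioo
    intro θ hθ
    have hs : 0 < Real.sin θ := Real.sin_pos_of_pos_of_lt_pi hθ.1
      (by linarith [hθ.2, Real.pi_pos])
    have hc : 0 < Real.cos θ := Real.cos_pos_of_mem_Ioo
      ⟨by linarith [hθ.1, Real.pi_pos], hθ.2⟩
    have hg0 : 0 ≤ g θ := by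
      rw [hg]
      have := Real.rpow_pos_of_pos hs (2*α+1)
      have := Real.rpow_pos_of_pos hc (2*β+1)
      positivity
    simp only [NNReal.smul_def, Real.coe_toNNReal _ hg0, smul_eq_mul]
  -- step 2 : pointwise expansion
  have h2 : ∀ θ ∈ Set.Ioo (0:ℝ) (π/2),
      g θ * ((1 + Real.cos (2 * θ)) ^ k * jacobiP α β n (Real.cos (2 * θ))) =
      ∑ j ∈ Finset.range (n+1),
        (C * 2^k * (-1:ℝ)^j * (poch (α + j + 1) (n - j) / ((n - j).factorial : ℝ)) *
          (poch (β + ((n:ℝ) - (j:ℝ)) + 1) j / (j.factorial : ℝ))) *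
        (Real.sin θ ^ (2*(α + (j:ℝ))+1) *
          Real.cos θ ^ (2*(β + ((n:ℝ)-(j:ℝ)) + (k:ℝ))+1)) := by
    intro θ hθ
    have hs : 0 < Real.sin θ := Real.sin_pos_of_pos_of_lt_pi hθ.1
      (by linarith [hθ.2, Real.pi_pos])
    have hc : 0 < Real.cos θ := Real.cos_pos_of_mem_Ioo
      ⟨by linarith [hθ.1, Real.pi_pos], hθ.2⟩
    have hpyth : Real.sin θ ^ 2 + Real.cos θ ^ 2 = 1 := Real.sin_sq_add_cos_sq θ
    have hct : Real.cos (2*θ) = 2 * Real.cos θ ^ 2 - 1 := Real.cos_two_mul θ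
    rw [hg, jacobiP, Finset.mul_sum, Finset.mul_sum]
    apply Finset.sum_congr rfl
    intro j hj
    rw [Finset.mem_range] at hj
    have hj' : j ≤ n := by omega
    rw [show (Real.cos (2*θ) - 1)/2 = -(Real.sin θ^2) from by rw [hct]; linarith,
        show (Real.cos (2*θ) + 1)/2 = Real.cos θ^2 from by rw [hct]; ring,
        show 1 + Real.cos (2*θ) = 2 * Real.cos θ^2 from by rw [hct]; ring]
    rw [neg_pow, mul_pow]
    rw [show (2*(α + (j:ℝ))+1) = (2*α+1) + 2*(j:ℝ) from by ring,
        show (2*(β + ((n:ℝ)-(j:ℝ)) + (k:ℝ))+1) = (2*β+1) + 2*(((n-j)+k : ℕ):ℝ) from by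
          push_cast [Nat.cast_sub hj']; ring]
    rw [← rpow_sq_pow hs (2*α+1) j, ← rpow_sq_pow hc (2*β+1) ((n-j)+k), pow_add]
    ring
  rw [h1, setIntegral_congr_fun measurableSet_Ioo h2]
  -- step 3 : integrate term by term
  rw [integral_finset_sum _ (fun j hj => by
    have hj' : j ≤ n := by
      rw [Finset.mem_range] at hj; omega
    have hnj : (0:ℝ) ≤ (n:ℝ) - (j:ℝ) := by
      have := (Nat.cast_le (α := ℝ)).2 hj'
      linarith
    have hk0 : (0:ℝ) ≤ (k:ℝ) := Nat.cast_nonneg k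
    exact (sinCosIntegrable (a := α + (j:ℝ)) (b := β + ((n:ℝ)-(j:ℝ)) + (k:ℝ))
      (by linarith) (by linarith)).const_mul _)]
  simp_rw [MeasureTheory.integral_const_mul]
  -- step 4 : evaluate each integral and rearrange
  have h4 : ∀ j ∈ Finset.range (n+1),
      (C * 2^k * (-1:ℝ)^j * (poch (α + j + 1) (n - j) / ((n - j).factorial : ℝ)) *
        (poch (β + ((n:ℝ) - (j:ℝ)) + 1) j / (j.factorial : ℝ))) *
      (∫ θ in Set.Ioo (0:ℝ) (π/2), Real.sin θ ^ (2*(α + (j:ℝ))+1) *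
          Real.cos θ ^ (2*(β + ((n:ℝ)-(j:ℝ)) + (k:ℝ))+1))
      = (C * 2^k * Real.Gamma (α+(n:ℝ)+1) * Real.Gamma (β+(n:ℝ)+1) /
          ((n.factorial : ℝ) * (2 * Real.Gamma (α+β+(n:ℝ)+(k:ℝ)+2)))) *
        ((-1:ℝ)^j * (n.choose j : ℝ) * poch (β + ((n:ℝ) - (j:ℝ)) + 1) k) := by
    intro j hj
    rw [Finset.mem_range] at hj
    have hj' : j ≤ n := by omega
    have hnj : (0:ℝ) ≤ (n:ℝ) - (j:ℝ) := by
      have := (Nat.cast_le (α := ℝ)).2 hj'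
      linarith
    rw [sinCosBeta (a := α + (j:ℝ)) (b := β + ((n:ℝ)-(j:ℝ)) + (k:ℝ))
      (by linarith) (by linarith)]
    -- Gamma manipulations
    have c1 : poch (α+(j:ℝ)+1) (n-j) * Real.Gamma (α+(j:ℝ)+1) = Real.Gamma (α+(n:ℝ)+1) := by
      have h := Gamma_poch (x := α+(j:ℝ)+1) (by linarith) (n-j)
      rw [Nat.cast_sub hj', show α+(j:ℝ)+1+((n:ℝ)-(j:ℝ)) = α+(n:ℝ)+1 from by ring] at h
      linarith [h]
    have c2 : Real.Gamma (β + ((n:ℝ)-(j:ℝ)) + (k:ℝ) + 1)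
        = poch (β + ((n:ℝ)-(j:ℝ)) + 1) k * Real.Gamma (β + ((n:ℝ)-(j:ℝ)) + 1) := by
      have h := Gamma_poch (x := β + ((n:ℝ)-(j:ℝ)) + 1) (by linarith) k
      rw [show β+((n:ℝ)-(j:ℝ))+1+(k:ℝ) = β+((n:ℝ)-(j:ℝ))+(k:ℝ)+1 from by ring] at h
      exact h
    have c3 : poch (β + ((n:ℝ)-(j:ℝ)) + 1) j * Real.Gamma (β + ((n:ℝ)-(j:ℝ)) + 1)
        = Real.Gamma (β+(n:ℝ)+1) := by
      have h := Gamma_poch (x := β + ((n:ℝ)-(j:ℝ)) + 1) (by linarith) j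
      rw [show β+((n:ℝ)-(j:ℝ))+1+(j:ℝ) = β+(n:ℝ)+1 from by ring] at h
      linarith [h]
    have c4 : (n.choose j : ℝ) * (j.factorial : ℝ) * ((n-j).factorial : ℝ)
        = (n.factorial : ℝ) := by
      exact_mod_cast congrArg (Nat.cast (R := ℝ))
        (Nat.choose_mul_factorial_mul_factorial hj')
    have harg : α + (j:ℝ) + (β + ((n:ℝ)-(j:ℝ)) + (k:ℝ)) + 2 = α+β+(n:ℝ)+(k:ℝ)+2 := by ring
    rw [show α + (j:ℝ) + 1 = α + (j:ℝ) + 1 from rfl, harg]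
    rw [← c1, ← c3, ← c4, c2]
    have hf1 : ((n-j).factorial : ℝ) ≠ 0 := Nat.cast_ne_zero.2 (Nat.factorial_ne_zero _)
    have hf2 : ((j).factorial : ℝ) ≠ 0 := Nat.cast_ne_zero.2 (Nat.factorial_ne_zero _)
    have hGd : Real.Gamma (α+β+(n:ℝ)+(k:ℝ)+2) ≠ 0 :=
      (Real.Gamma_pos_of_pos (by
        have : (0:ℝ) ≤ (n:ℝ) := Nat.cast_nonneg n
        have : (0:ℝ) ≤ (k:ℝ) := Nat.cast_nonneg k
        linarith)).ne'
    have hch : (n.choose j : ℝ) ≠ 0 := Nat.cast_ne_zero.2 (Nat.choose_pos hj').ne'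
    field_simp [hf1, hf2, hGd, hch, hGa.ne', hGb.ne', hGc.ne']
  rw [Finset.sum_congr rfl h4, ← Finset.mul_sum]
  rw [sum_key k n β]
  -- step 5 : final algebra
  rcases lt_or_ge k n with hkn | hnk
  · rw [Nat.choose_eq_zero_of_lt hkn, Nat.descFactorial_eq_zero_iff_lt.2 hkn]
    simp
  · have d1 : ((k.descFactorial n : ℕ) : ℝ) = (n.factorial : ℝ) * (k.choose n : ℝ) := by
      exact_mod_cast congrArg (Nat.cast (R := ℝ)) (Nat.descFactorial_eq_factorial_mul_choose k n)
    have d2 : poch (β+1) k = poch (β+1) n * poch (β+(n:ℝ)+1) (k-n) := by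
      have h := poch_add (β+1) n (k-n)
      rw [Nat.add_sub_cancel' hnk, show β+1+(n:ℝ) = β+(n:ℝ)+1 from by ring] at h
      exact h
    have d3 : Real.Gamma (α+(n:ℝ)+1) = poch (α+1) n * Real.Gamma (α+1) := by
      have h := Gamma_poch (x := α+1) (by linarith) n
      rw [show α+1+(n:ℝ) = α+(n:ℝ)+1 from by ring] at h
      exact h
    have d4 : Real.Gamma (β+(n:ℝ)+1) = poch (β+1) n * Real.Gamma (β+1) := by
      have h := Gamma_poch (x := β+1) (by linarith) n
      rw [show β+1+(n:ℝ) = β+(n:ℝ)+1 from by ring] at h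
      exact h
    have d5 : Real.Gamma (α+β+(n:ℝ)+(k:ℝ)+2) = poch (α+β+2) (n+k) * Real.Gamma (α+β+2) := by
      have h := Gamma_poch (x := α+β+2) (by linarith) (n+k)
      rw [show α+β+2+((n+k : ℕ):ℝ) = α+β+(n:ℝ)+(k:ℝ)+2 from by push_cast; ring] at h
      exact h
    rw [d1, d2, d3, d4, d5]
    have hp1 : poch (α+β+2) (n+k) ≠ 0 := (poch_pos (by linarith) _).ne'
    have hfn : ((n.factorial : ℕ) : ℝ) ≠ 0 := Nat.cast_ne_zero.2 (Nat.factorial_ne_zero _)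
    rw [hC]
    field_simp
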